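/- Fix d ≥ 2, σ > 0, β > 0 and a continuously differentiable K : Δ → (0,∞). Define the matrix field c on Δ by c_{ij}(x) := −σ² K(x)² x^i x^j ( (x^i)^{1−2β} + (x^j)^{1−2β} − Σ_{k=1}^d (x^k)^{2(1−β)} ) for i ≠ j, and c_{ii}(x) := −Σ_{j≠i} c_{ij}(x). Let H(x) := log( K(x)² · (Σ_{k=1}^d (x^k)^{2β})^{(2(1+(d−1)β)−d)/(2β)} · ∏_{i=1}^d (x^i)^{2(1−β)} ). Then for every x ∈ Δ and every index i: Σ_{j≠i} c_{ij}(x) (∂_j − ∂_i)H(x) = Σ_{j≠i} (∂_j − ∂_i) c_{ij}(x); that is, c(x) ∇H(x) = div c(x) on Δ, so c^{-1} div c = ∇H in the generalized volatility-stabilized model. -/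

import Mathlib

set_option maxHeartbeats 1000000

open scoped BigOperators

/-- The open unit simplex in `ℝ^d`. -/
def openSimplex (d : ℕ) : Set (Fin d → ℝ) :=
  {x | (∀ i, 0 < x i) ∧ ∑ i, x i = 1}

/-- Directional derivative `(∂_j - ∂_i) h (x)` along `e_j - e_i`. -/
noncomputable def dirDeriv {d : ℕ} (h : (Fin d → ℝ) → ℝ) (x : Fin d → ℝ)
    (i j : Fin d) : ℝ :=
  fderiv ℝ h x (Pi.single j 1 - Pi.single i 1)

/-- The covariance matrix field of the generalized volatility-stabilized model:
`c_{ij}(x) = -σ² K(x)² xⁱ xʲ ((xⁱ)^{1-2β} + (xʲ)^{1-2β} - ∑_k (x^k)^{2(1-β)})` for `i ≠ j`,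
and `c_{ii}(x) = -∑_{j≠i} c_{ij}(x)`. -/
noncomputable def cGVS (d : ℕ) (σ β : ℝ) (K : (Fin d → ℝ) → ℝ)
    (i j : Fin d) (x : Fin d → ℝ) : ℝ :=
  if i = j then
    ∑ k ∈ Finset.univ.filter (fun k => k ≠ i),
      σ ^ 2 * K x ^ 2 * x i * x k *
        (x i ^ (1 - 2 * β) + x k ^ (1 - 2 * β) - ∑ l, x l ^ (2 * (1 - β)))
  else
    -(σ ^ 2 * K x ^ 2 * x i * x j *
        (x i ^ (1 - 2 * β) + x j ^ (1 - 2 * β) - ∑ l, x l ^ (2 * (1 - β))))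

/-- The function `H(x) = log( K(x)² |x|_{2β}^{2(1+(d-1)β)-d} ∏_i (xⁱ)^{2(1-β)} )`, where
`|x|_{2β}^{2(1+(d-1)β)-d} = (∑_k (x^k)^{2β})^{(2(1+(d-1)β)-d)/(2β)}`. -/
noncomputable def Hgvs (d : ℕ) (β : ℝ) (K : (Fin d → ℝ) → ℝ) (x : Fin d → ℝ) : ℝ :=
  Real.log (K x ^ 2 *
    (∑ k, x k ^ (2 * β)) ^ ((2 * (1 + ((d : ℝ) - 1) * β) - (d : ℝ)) / (2 * β)) *
    ∏ i, x i ^ (2 * (1 - β)))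

/-! ### Auxiliary lemmas -/

lemma sum_E_eq_zero {d : ℕ} (x y : Fin d → ℝ) (i : Fin d)
    (hx : ∀ k, 0 < x k) (hy : ∀ k, 0 < y k) (hs : ∑ k, x k = 1)
    (p q g T S : ℝ) (hq : q = p + 1) (hT : T = ∑ k, y k)
    (hS : S = ∑ l, x l ^ 2 / y l) (hg : g = q - p * d) :
    ∑ j, (x i * x j * (x i / y i + x j / y j - S) *
          (g / T * (y j / x j - y i / x i) + q * ((x j)⁻¹ - (x i)⁻¹))
        - ((x i - x j) * (x i / y i + x j / y j - S)
           + x i * x j * (p * ((y j)⁻¹ - (y i)⁻¹) - q * (x j / y j - x i / y i)))) = 0 := by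
  have hT0 : T ≠ 0 := by
    rw [hT]; exact (Finset.sum_pos (fun k _ => hy k) ⟨i, Finset.mem_univ i⟩).ne'
  have hxi := (hx i).ne'
  have hyi := (hy i).ne'
  set A : ℝ := p * x i * (x i / y i - S) with hA
  set B : ℝ := -(g/T) * y i * (x i / y i - S) - p * (x i / y i - S) + (g/T) * x i
      + p * (x i / y i) - q * x i * (x i / y i) with hB
  set C : ℝ := (g/T) * x i * (x i / y i - S) with hC
  set Ee : ℝ := -(g/T) * y i - p + q * x i with hEe
  have step : ∀ j : Fin d,
      (x i * x j * (x i / y i + x j / y j - S) *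
          (g / T * (y j / x j - y i / x i) + q * ((x j)⁻¹ - (x i)⁻¹))
        - ((x i - x j) * (x i / y i + x j / y j - S)
           + x i * x j * (p * ((y j)⁻¹ - (y i)⁻¹) - q * (x j / y j - x i / y i))))
      = A + B * x j + C * y j + Ee * (x j ^ 2 / y j) := by
    intro j
    have hxj := (hx j).ne'
    have hyj := (hy j).ne'
    rw [hA, hB, hC, hEe, hq]
    field_simp
    ring
  rw [Finset.sum_congr rfl (fun j _ => step j)]
  have expand : ∑ j : Fin d, (A + B * x j + C * y j + Ee * (x j ^ 2 / y j))
      = (d : ℝ) * A + B * 1 + C * T + Ee * S := by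
    simp only [Finset.sum_add_distrib, Finset.sum_const, Finset.card_univ,
      Fintype.card_fin, nsmul_eq_mul, ← Finset.mul_sum, hs, hT, hS]
  rw [expand, hA, hB, hC, hEe, hg, hq]
  field_simp
  ring

lemma hasFDerivAt_coord_rpow {d : ℕ} (k : Fin d) (e : ℝ) (x : Fin d → ℝ) (hx : x k ≠ 0) :
    HasFDerivAt (fun y : Fin d → ℝ => y k ^ e)
      ((e * x k ^ (e - 1)) • (ContinuousLinearMap.proj (R := ℝ) (φ := fun _ : Fin d => ℝ) k)) x :=
  (hasFDerivAt_apply k x).rpow_const (Or.inl hx)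

lemma sum_mul_single {d : ℕ} (c : Fin d → ℝ) (i j : Fin d) :
    ∑ k, c k * ((Pi.single j 1 : Fin d → ℝ) k - (Pi.single i 1 : Fin d → ℝ) k) = c j - c i := by
  simp [Pi.single_apply, mul_sub, Finset.sum_sub_distrib, mul_ite, Finset.sum_ite_eq']

lemma dirH {d : ℕ} (β : ℝ) (K : (Fin d → ℝ) → ℝ) (hK : ContDiff ℝ 1 K)
    (x : Fin d → ℝ) (hx : ∀ k, 0 < x k) (hKx : K x ≠ 0) (i j : Fin d) :
    dirDeriv (Hgvs d β K) x i j =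
      2 * (fderiv ℝ K x (Pi.single j 1 - Pi.single i 1)) / K x
      + ((2 * (1 + ((d : ℝ) - 1) * β) - (d : ℝ)) / (2 * β)) *
          ((2 * β * x j ^ (2 * β - 1) - 2 * β * x i ^ (2 * β - 1)) / (∑ k, x k ^ (2 * β)))
      + (2 * (1 - β)) * ((x j)⁻¹ - (x i)⁻¹) := by
  classical
  set γ : ℝ := (2 * (1 + ((d : ℝ) - 1) * β) - (d : ℝ)) / (2 * β) with hγ
  set q : ℝ := 2 * (1 - β) with hqdef
  set Ht : (Fin d → ℝ) → ℝ := fun y =>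
    Real.log (K y ^ 2) + γ * Real.log (∑ k, y k ^ (2 * β)) + q * ∑ k, Real.log (y k) with hHt
  have hU : IsOpen {y : Fin d → ℝ | (∀ k, 0 < y k) ∧ K y ≠ 0} := by
    have h1 : IsOpen {y : Fin d → ℝ | ∀ k, 0 < y k} := by
      have : {y : Fin d → ℝ | ∀ k, 0 < y k} = ⋂ k, {y | 0 < y k} := by
        ext y; simp [Set.mem_iInter]
      rw [this]
      exact isOpen_iInter_of_finite fun k => isOpen_lt continuous_const (continuous_apply k)
    have h2 : IsOpen {y : Fin d → ℝ | K y ≠ 0} :=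
      (isOpen_ne : IsOpen {z : ℝ | z ≠ 0}).preimage hK.continuous
    exact h1.inter h2
  have hmem : x ∈ {y : Fin d → ℝ | (∀ k, 0 < y k) ∧ K y ≠ 0} := ⟨hx, hKx⟩
  have heq : Hgvs d β K =ᶠ[nhds x] Ht := by
    filter_upwards [hU.mem_nhds hmem] with y hy
    obtain ⟨hy0, hKy⟩ := hy
    have hTy : (0:ℝ) < ∑ k, y k ^ (2 * β) :=
      Finset.sum_pos (fun k _ => Real.rpow_pos_of_pos (hy0 k) _) ⟨i, Finset.mem_univ i⟩
    have hPy : (0:ℝ) < ∏ k, y k ^ q :=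
      Finset.prod_pos (fun k _ => Real.rpow_pos_of_pos (hy0 k) _)
    have hK2 : (0:ℝ) < K y ^ 2 := by positivity
    rw [Hgvs, hHt]
    rw [Real.log_mul (by positivity) hPy.ne', Real.log_mul hK2.ne' (by positivity)]
    rw [Real.log_rpow hTy]
    have : Real.log (∏ k, y k ^ q) = q * ∑ k, Real.log (y k) := by
      rw [Real.log_prod (fun k _ => (Real.rpow_pos_of_pos (hy0 k) _).ne')]
      rw [Finset.mul_sum]
      exact Finset.sum_congr rfl fun k _ => Real.log_rpow (hy0 k) q
    rw [this]
  have hKd : HasFDerivAt K (fderiv ℝ K x) x :=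
    (hK.differentiable one_ne_zero x).hasFDerivAt
  have hT0 : (0:ℝ) < ∑ k, x k ^ (2 * β) :=
    Finset.sum_pos (fun k _ => Real.rpow_pos_of_pos (hx k) _) ⟨i, Finset.mem_univ i⟩
  have hlog2 := (hasDerivAt_pow 2 (K x)).log (pow_ne_zero 2 hKx)
  have h1 : HasFDerivAt (fun y => Real.log (K y ^ 2))
      ((((2:ℕ) * K x ^ (2-1)) / K x ^ 2) • fderiv ℝ K x) x :=
    hlog2.comp_hasFDerivAt x hKd
  have h2 : HasFDerivAt (fun y : Fin d → ℝ => ∑ k, y k ^ (2 * β))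
      (∑ k, (2 * β * x k ^ (2 * β - 1)) • (ContinuousLinearMap.proj (R := ℝ) (φ := fun _ : Fin d => ℝ) k)) x :=
    HasFDerivAt.fun_sum fun k _ => hasFDerivAt_coord_rpow k (2 * β) x (hx k).ne'
  have h2' : HasFDerivAt (fun y : Fin d → ℝ => γ * Real.log (∑ k, y k ^ (2 * β)))
      (γ • ((∑ k, x k ^ (2 * β))⁻¹ • (∑ k, (2 * β * x k ^ (2 * β - 1)) •
        (ContinuousLinearMap.proj (R := ℝ) (φ := fun _ : Fin d => ℝ) k)))) x :=
    (h2.log hT0.ne').const_mul γ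
  have h3 : HasFDerivAt (fun y : Fin d → ℝ => q * ∑ k, Real.log (y k))
      (q • (∑ k, (x k)⁻¹ • (ContinuousLinearMap.proj (R := ℝ) (φ := fun _ : Fin d => ℝ) k))) x :=
    (HasFDerivAt.fun_sum fun k _ =>
      (hasFDerivAt_apply k x).log (hx k).ne').const_mul q
  have hHtd := (h1.fun_add h2').fun_add h3
  rw [dirDeriv, heq.fderiv_eq, hHtd.fderiv]
  simp only [ContinuousLinearMap.add_apply, ContinuousLinearMap.coe_smul',
    Pi.smul_apply, ContinuousLinearMap.coe_sum', Finset.sum_apply,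
    ContinuousLinearMap.proj_apply, smul_eq_mul, Pi.sub_apply]
  rw [sum_mul_single (fun k => 2 * β * x k ^ (2 * β - 1)) i j,
    sum_mul_single (fun k => (x k)⁻¹) i j]
  have h2ne : K x ^ 2 ≠ 0 := pow_ne_zero 2 hKx
  norm_num
  field_simp

lemma dirC {d : ℕ} (σ β : ℝ) (K : (Fin d → ℝ) → ℝ) (hK : ContDiff ℝ 1 K)
    (x : Fin d → ℝ) (hx : ∀ k, 0 < x k) (i j : Fin d) (hij : i ≠ j) :
    dirDeriv (cGVS d σ β K i j) x i j =
      -(σ ^ 2 * (2 * K x * fderiv ℝ K x (Pi.single j 1 - Pi.single i 1)) * x i * x j *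
          (x i ^ (1 - 2 * β) + x j ^ (1 - 2 * β) - ∑ l, x l ^ (2 * (1 - β)))
        + σ ^ 2 * K x ^ 2 * ((x i - x j) *
            (x i ^ (1 - 2 * β) + x j ^ (1 - 2 * β) - ∑ l, x l ^ (2 * (1 - β)))
          + x i * x j * ((1 - 2 * β) * (x j ^ (1 - 2 * β - 1) - x i ^ (1 - 2 * β - 1))
              - (2 * (1 - β)) * (x j ^ (2 * (1 - β) - 1) - x i ^ (2 * (1 - β) - 1))))) := by
  classical
  have hfun : cGVS d σ β K i j = fun y =>
      -(σ ^ 2 * K y ^ 2 * y i * y j *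
        (y i ^ (1 - 2 * β) + y j ^ (1 - 2 * β) - ∑ l, y l ^ (2 * (1 - β)))) := by
    funext y; simp only [cGVS, if_neg hij]
  have hKd : HasFDerivAt K (fderiv ℝ K x) x := (hK.differentiable one_ne_zero x).hasFDerivAt
  have hsq : HasFDerivAt (fun y => K y ^ 2) (((2:ℕ) * K x ^ (2-1)) • fderiv ℝ K x) x :=
    (hasDerivAt_pow 2 (K x)).comp_hasFDerivAt x hKd
  have h0 : HasFDerivAt (fun y => σ ^ 2 * K y ^ 2)
      (σ ^ 2 • (((2:ℕ) * K x ^ (2-1)) • fderiv ℝ K x)) x := hsq.const_mul _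
  have h01 := h0.fun_mul (hasFDerivAt_apply i x)
  have h02 := h01.fun_mul (hasFDerivAt_apply j x)
  have hF := ((hasFDerivAt_coord_rpow i (1 - 2 * β) x (hx i).ne').fun_add
        (hasFDerivAt_coord_rpow j (1 - 2 * β) x (hx j).ne')).fun_sub
      (HasFDerivAt.fun_sum (u := Finset.univ)
        (fun l _ => hasFDerivAt_coord_rpow l (2 * (1 - β)) x (hx l).ne'))
  have hm := (h02.fun_mul hF).fun_neg
  rw [hfun, dirDeriv, hm.fderiv]
  simp only [ContinuousLinearMap.neg_apply, ContinuousLinearMap.add_apply,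
    ContinuousLinearMap.coe_smul', Pi.smul_apply, ContinuousLinearMap.coe_sum',
    Finset.sum_apply, ContinuousLinearMap.proj_apply, smul_eq_mul, Pi.sub_apply,
    ContinuousLinearMap.sub_apply]
  rw [sum_mul_single (fun l => 2 * (1 - β) * x l ^ (2 * (1 - β) - 1)) i j]
  simp only [Pi.single_apply, if_neg hij, if_neg (Ne.symm hij), if_pos rfl]
  norm_num
  ring

/-- in the generalized volatility-stabilized model, `c ∇H = div c` on the
open simplex, interpreted via the tangential directional derivatives `(∂_j - ∂_i)`. -/
theorem statement16 {d : ℕ} (hd : 2 ≤ d) (σ β : ℝ) (hσ : 0 < σ) (hβ : 0 < β)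
    (K : (Fin d → ℝ) → ℝ) (hK : ContDiff ℝ 1 K)
    (hKpos : ∀ x ∈ openSimplex d, 0 < K x) :
    ∀ x ∈ openSimplex d, ∀ i : Fin d,
      ∑ j ∈ Finset.univ.filter (fun j => j ≠ i),
        cGVS d σ β K i j x * dirDeriv (Hgvs d β K) x i j
        = ∑ j ∈ Finset.univ.filter (fun j => j ≠ i),
            dirDeriv (cGVS d σ β K i j) x i j := by
  classical
  intro x hmem i
  obtain ⟨hx, hsum⟩ := hmem
  have hKx : K x ≠ 0 := (hKpos x ⟨hx, hsum⟩).ne'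
  have hy : ∀ k, (0:ℝ) < x k ^ (2 * β) := fun k => Real.rpow_pos_of_pos (hx k) _
  have hT0 : (0:ℝ) < ∑ k, x k ^ (2 * β) :=
    Finset.sum_pos (fun k _ => hy k) ⟨i, Finset.mem_univ i⟩
  -- per-coordinate rpow conversions
  have c1 : ∀ k : Fin d, x k ^ (2 * β - 1) = x k ^ (2 * β) / x k := fun k => by
    rw [Real.rpow_sub (hx k), Real.rpow_one]
  have c2 : ∀ k : Fin d, x k ^ (1 - 2 * β) = x k / x k ^ (2 * β) := fun k => by
    rw [Real.rpow_sub (hx k), Real.rpow_one]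
  have c3 : ∀ k : Fin d, x k ^ (2 * (1 - β)) = x k ^ 2 / x k ^ (2 * β) := fun k => by
    rw [show (2:ℝ) * (1 - β) = 2 - 2 * β from by ring, Real.rpow_sub (hx k),
      show (2:ℝ) = ((2:ℕ):ℝ) from by norm_num, Real.rpow_natCast]
  have c4 : ∀ k : Fin d, x k ^ (1 - 2 * β - 1) = (x k ^ (2 * β))⁻¹ := fun k => by
    rw [show (1:ℝ) - 2 * β - 1 = -(2 * β) from by ring, Real.rpow_neg (hx k).le]
  have c5 : ∀ k : Fin d, x k ^ (2 * (1 - β) - 1) = x k / x k ^ (2 * β) := fun k => by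
    rw [show (2:ℝ) * (1 - β) - 1 = 1 - 2 * β from by ring]; exact c2 k
  -- key termwise identity
  have key : ∀ j ∈ Finset.univ.filter (fun j => j ≠ i),
      cGVS d σ β K i j x * dirDeriv (Hgvs d β K) x i j
        - dirDeriv (cGVS d σ β K i j) x i j
      = (-(σ ^ 2 * K x ^ 2)) *
        (x i * x j * (x i / x i ^ (2 * β) + x j / x j ^ (2 * β)
              - ∑ l, x l ^ 2 / x l ^ (2 * β)) *
          ((2 * (1 - β) - (1 - 2 * β) * d) / (∑ k, x k ^ (2 * β)) *
              (x j ^ (2 * β) / x j - x i ^ (2 * β) / x i)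
            + (2 * (1 - β)) * ((x j)⁻¹ - (x i)⁻¹))
        - ((x i - x j) * (x i / x i ^ (2 * β) + x j / x j ^ (2 * β)
              - ∑ l, x l ^ 2 / x l ^ (2 * β))
          + x i * x j * ((1 - 2 * β) * ((x j ^ (2 * β))⁻¹ - (x i ^ (2 * β))⁻¹)
            - (2 * (1 - β)) * (x j / x j ^ (2 * β) - x i / x i ^ (2 * β))))) := by
    intro j hj
    have hji : j ≠ i := (Finset.mem_filter.mp hj).2
    have hij : i ≠ j := hji.symm
    rw [dirH β K hK x hx hKx i j, dirC σ β K hK x hx i j hij]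
    simp only [cGVS, if_neg hij]
    simp only [c1, c2, c3, c4, c5]
    have hβ' : (2:ℝ) * β ≠ 0 := by positivity
    field_simp
    ring
  rw [← sub_eq_zero, ← Finset.sum_sub_distrib, Finset.sum_congr rfl key, ← Finset.mul_sum]
  have hfull : ∑ j ∈ Finset.univ.filter (fun j => j ≠ i),
      (x i * x j * (x i / x i ^ (2 * β) + x j / x j ^ (2 * β)
            - ∑ l, x l ^ 2 / x l ^ (2 * β)) *
        ((2 * (1 - β) - (1 - 2 * β) * d) / (∑ k, x k ^ (2 * β)) *
            (x j ^ (2 * β) / x j - x i ^ (2 * β) / x i)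
          + (2 * (1 - β)) * ((x j)⁻¹ - (x i)⁻¹))
      - ((x i - x j) * (x i / x i ^ (2 * β) + x j / x j ^ (2 * β)
            - ∑ l, x l ^ 2 / x l ^ (2 * β))
        + x i * x j * ((1 - 2 * β) * ((x j ^ (2 * β))⁻¹ - (x i ^ (2 * β))⁻¹)
          - (2 * (1 - β)) * (x j / x j ^ (2 * β) - x i / x i ^ (2 * β)))))
      = ∑ j, (x i * x j * (x i / x i ^ (2 * β) + x j / x j ^ (2 * β)
            - ∑ l, x l ^ 2 / x l ^ (2 * β)) *
        ((2 * (1 - β) - (1 - 2 * β) * d) / (∑ k, x k ^ (2 * β)) *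
            (x j ^ (2 * β) / x j - x i ^ (2 * β) / x i)
          + (2 * (1 - β)) * ((x j)⁻¹ - (x i)⁻¹))
      - ((x i - x j) * (x i / x i ^ (2 * β) + x j / x j ^ (2 * β)
            - ∑ l, x l ^ 2 / x l ^ (2 * β))
        + x i * x j * ((1 - 2 * β) * ((x j ^ (2 * β))⁻¹ - (x i ^ (2 * β))⁻¹)
          - (2 * (1 - β)) * (x j / x j ^ (2 * β) - x i / x i ^ (2 * β))))) := by
    refine Finset.sum_subset (Finset.filter_subset _ _) (fun k _ hk => ?_)
    have hki : k = i := by simpa using hk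
    subst hki
    ring
  rw [hfull]
  have hzero := sum_E_eq_zero x (fun k => x k ^ (2 * β)) i hx hy hsum
    (1 - 2 * β) (2 * (1 - β)) (2 * (1 - β) - (1 - 2 * β) * d)
    (∑ k, x k ^ (2 * β)) (∑ l, x l ^ 2 / x l ^ (2 * β))
    (by ring) rfl rfl rfl
  rw [hzero, mul_zero]
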